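/- Let x_1, x_2, ..., x_n be a real-valued independent and identically distributed random sample with common cumulative distribution function F, let z = max(x_1, ..., x_n), and let X be a further random variable with the same distribution, independent of the sample. Then for every ε ≥ √( (1/(2n)) · ln 2 ), one has Pr( Pr(X ≤ z | z) ≥ 1 − ε ) ≥ 1 − exp(−2 n ε²); equivalently, since Pr(X ≤ z | z) = F(z), the event that a fresh independent draw from the score distribution does not exceed the sample maximum has conditional probability at least 1 − ε, with probability at least 1 − exp(−2 n ε²) over the sample. -/

import Mathlib

open MeasureTheory ProbabilityTheory Real

/-- Probability integral transform bound: for a real probability measure `ν` and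
`0 < t < 1`, the set where the cdf is below `t` is measurable and has measure at
most `t`. -/
lemma cdf_lt_set_bound (ν : Measure ℝ) [IsProbabilityMeasure ν] {t : ℝ}
    (ht0 : 0 < t) (ht1 : t < 1) :
    MeasurableSet {x | cdf ν x < t} ∧ ν {x | cdf ν x < t} ≤ ENNReal.ofReal t := by
  set S := {x | cdf ν x < t} with hS
  have hne : S.Nonempty := by
    exact ((tendsto_cdf_atBot ν).eventually_lt_const ht0).exists
  have hba : BddAbove S := by
    have h : ∀ᶠ x in Filter.atTop, t < cdf ν x :=
      (tendsto_cdf_atTop ν).eventually_const_lt ht1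
    obtain ⟨x₀, hx₀⟩ := h.exists
    exact ⟨x₀, fun x hx => le_of_not_gt fun hlt =>
      absurd (lt_of_lt_of_le hx₀ (monotone_cdf ν hlt.le)) (not_lt.mpr hx.le)⟩
  set s := sSup S with hs
  have hforall : ∀ x < s, cdf ν x < t := by
    intro x hx
    obtain ⟨y, hyS, hxy⟩ := exists_lt_of_lt_csSup hne hx
    exact lt_of_le_of_lt (monotone_cdf ν hxy.le) hyS
  by_cases hsS : s ∈ S
  · have heq : S = Set.Iic s :=
      Set.Subset.antisymm (fun x hx => le_csSup hba hx)
        (fun x hx => lt_of_le_of_lt (monotone_cdf ν hx) hsS)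
    rw [heq]
    refine ⟨measurableSet_Iic, ?_⟩
    rw [← ofReal_cdf]
    exact ENNReal.ofReal_le_ofReal hsS.le
  · have heq : S = Set.Iio s := by
      apply Set.Subset.antisymm
      · exact fun x hx => lt_of_le_of_ne (le_csSup hba hx) (fun h => hsS (show sSup S ∈ S from h ▸ hx))
      · exact fun x hx => hforall x hx
    rw [heq]
    refine ⟨measurableSet_Iio, ?_⟩
    have hunion : Set.Iio s = ⋃ k : ℕ, Set.Iic (s - 1 / (k + 1)) := by
      ext x
      simp only [Set.mem_Iio, Set.mem_iUnion, Set.mem_Iic]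
      constructor
      · intro hx
        obtain ⟨k, hk⟩ := exists_nat_one_div_lt (sub_pos.mpr hx)
        exact ⟨k, by linarith⟩
      · rintro ⟨k, hk⟩
        have : (0:ℝ) < 1 / (k + 1) := by positivity
        linarith
    rw [hunion]
    have hdir : Directed (· ⊆ ·) (fun k : ℕ => Set.Iic (s - 1 / (k + 1))) := by
      intro i j
      rcases le_total (i : ℕ) j with h | h
      · exact ⟨j, Set.Iic_subset_Iic.mpr (by
          have : 1 / ((j:ℝ) + 1) ≤ 1 / ((i:ℝ) + 1) := by
            apply one_div_le_one_div_of_le (by positivity)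
            exact_mod_cast by omega
          linarith), subset_rfl⟩
      · exact ⟨i, subset_rfl, Set.Iic_subset_Iic.mpr (by
          have : 1 / ((i:ℝ) + 1) ≤ 1 / ((j:ℝ) + 1) := by
            apply one_div_le_one_div_of_le (by positivity)
            exact_mod_cast by omega
          linarith)⟩
    rw [hdir.measure_iUnion]
    apply iSup_le
    intro k
    rw [← ofReal_cdf]
    apply ENNReal.ofReal_le_ofReal
    apply (hforall _ ?_).le
    have : (0:ℝ) < 1 / (k + 1) := by positivity
    linarith

/-- Polynomial step for `1 - ε ≤ exp (-2 ε²)` on `[0,1]`. -/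
lemma one_sub_le_exp_neg_two_sq {ε : ℝ} (h0 : 0 ≤ ε) (h1 : ε ≤ 1) :
    1 - ε ≤ Real.exp (-2 * ε ^ 2) := by
  have hq : 1 - ε ≤ (1 - ε ^ 2 / 2) ^ 4 := by
    rcases le_total ε (1/2) with h | h
    · nlinarith [sq_nonneg ε, sq_nonneg (ε^2), pow_nonneg h0 3, pow_nonneg h0 4, sq_nonneg (ε^3),
        mul_nonneg h0 (sub_nonneg.mpr h), sq_nonneg (ε^2-ε)]
    rcases le_total ε (4/5) with h2 | h2
    · nlinarith [mul_nonneg (sub_nonneg.mpr h) (sub_nonneg.mpr h2), sq_nonneg (ε - 1/2),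
        sq_nonneg (ε-4/5), sq_nonneg (ε^2 - ε),
        mul_nonneg (mul_nonneg (sub_nonneg.mpr h) (sub_nonneg.mpr h2)) (sub_nonneg.mpr h1),
        sq_nonneg ((ε-1/2)*(4/5-ε))]
    · have ha : 0 ≤ ε - 4/5 := by linarith
      have hb : 0 ≤ 1 - ε := by linarith
      nlinarith [mul_nonneg ha hb, sq_nonneg (ε-4/5), sq_nonneg (1-ε),
        mul_nonneg (mul_nonneg ha hb) ha, mul_nonneg (mul_nonneg ha hb) hb,
        sq_nonneg ((ε-4/5)*(1-ε)), mul_nonneg (mul_nonneg (mul_nonneg ha ha) ha) hb,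
        mul_nonneg (mul_nonneg (mul_nonneg ha hb) hb) hb, sq_nonneg (ε-1),
        mul_nonneg (sq_nonneg (ε-4/5)) (sq_nonneg (1-ε)),
        mul_nonneg (mul_nonneg (sq_nonneg (ε-4/5)) (sq_nonneg (1-ε))) (mul_nonneg ha hb)]
  have hε2 : (0:ℝ) ≤ 1 - ε ^ 2 / 2 := by nlinarith
  have hexp : 1 - ε ^ 2 / 2 ≤ Real.exp (-(ε ^ 2 / 2)) := by
    have := Real.add_one_le_exp (-(ε ^ 2 / 2))
    linarith
  have hpow : (1 - ε ^ 2 / 2) ^ 4 ≤ Real.exp (-(ε ^ 2 / 2)) ^ 4 :=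
    pow_le_pow_left₀ hε2 hexp 4
  have : Real.exp (-(ε ^ 2 / 2)) ^ 4 = Real.exp (-2 * ε ^ 2) := by
    rw [← Real.exp_nat_mul]
    ring_nf
  linarith [hq.trans (hpow.trans_eq this)]

/-- For an i.i.d. real-valued sample `X 0, …, X (n-1)` with common CDF `F`, sample
maximum `z`, and a further independent draw `Y` from the same distribution, for every
`ε ≥ √((1/(2n)) · ln 2)` the event that a fresh draw does not exceed the sample maximum
has conditional probability `Pr(Y ≤ z ∣ z) = F(z)` at least `1 − ε`, with probability
at least `1 − exp(−2nε²)` over the sample. -/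
theorem fresh_draw_below_sample_max
    {Ω : Type*} [MeasurableSpace Ω] (μ : Measure Ω) [IsProbabilityMeasure μ]
    (n : ℕ) (hn : 0 < n) (X : Fin n → Ω → ℝ)
    (hmeas : ∀ i, Measurable (X i))
    (hindep : iIndepFun X μ)
    (hident : ∀ i, IdentDistrib (X i) (X ⟨0, hn⟩) μ μ)
    (Y : Ω → ℝ) (hYmeas : Measurable Y)
    (hYident : IdentDistrib Y (X ⟨0, hn⟩) μ μ)
    (hYindep : IndepFun Y (fun ω => fun i => X i ω) μ)
    (F : ℝ → ℝ) (hF : ∀ i x, F x = (μ {ω | X i ω ≤ x}).toReal)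
    (z : Ω → ℝ) (hz : ∀ ω, IsGreatest (Set.range fun i => X i ω) (z ω))
    (ε : ℝ) (hε : Real.sqrt ((1 / (2 * n)) * Real.log 2) ≤ ε) :
    1 - Real.exp (-2 * n * ε ^ 2) ≤ (μ {ω | 1 - ε ≤ F (z ω)}).toReal := by
  have hexp_pos := Real.exp_pos (-2 * n * ε ^ 2)
  by_cases h1 : 1 ≤ ε
  · have huniv : {ω | 1 - ε ≤ F (z ω)} = Set.univ := by
      ext ω
      simp only [Set.mem_setOf_eq, Set.mem_univ, iff_true]
      have : 0 ≤ F (z ω) := by rw [hF ⟨0, hn⟩]; exact ENNReal.toReal_nonneg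
      linarith
    rw [huniv, measure_univ, ENNReal.toReal_one]
    linarith
  push_neg at h1
  have hε0 : 0 < ε := by
    refine lt_of_lt_of_le ?_ hε
    apply Real.sqrt_pos.mpr
    have hn' : (0:ℝ) < n := by exact_mod_cast hn
    have := Real.log_pos (by norm_num : (1:ℝ) < 2)
    positivity
  set x₀ : Fin n := ⟨0, hn⟩
  set ν : Measure ℝ := μ.map (X x₀) with hν
  have hνprob : IsProbabilityMeasure ν := Measure.isProbabilityMeasure_map (hmeas x₀).aemeasurable
  have hcdf : ∀ x, cdf ν x = F x := by
    intro x
    rw [cdf_eq_real, measureReal_def, hF x₀ x, hν, Measure.map_apply (hmeas x₀) measurableSet_Iic]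
    rfl
  set t : ℝ := 1 - ε with ht
  obtain ⟨hSmeas, hSle⟩ := cdf_lt_set_bound ν (t := t) (by simp [ht]; linarith) (by simp [ht]; linarith)
  set S := {x | cdf ν x < t} with hS
  have hXS : ∀ i, μ (X i ⁻¹' S) = ν S := by
    intro i
    rw [(hident i).measure_mem_eq hSmeas, hν, Measure.map_apply (hmeas x₀) hSmeas]
  have hbad : {ω | F (z ω) < t} = ⋂ i, X i ⁻¹' S := by
    ext ω
    simp only [Set.mem_setOf_eq, Set.mem_iInter, Set.mem_preimage, hS]
    constructor
    · intro h i
      have hle : X i ω ≤ z ω := (hz ω).2 ⟨i, rfl⟩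
      calc cdf ν (X i ω) ≤ cdf ν (z ω) := monotone_cdf ν hle
        _ = F (z ω) := hcdf _
        _ < t := h
    · intro h
      obtain ⟨i, hi⟩ := (hz ω).1
      have hi' : X i ω = z ω := hi
      have := h i
      rw [hi', hcdf] at this
      exact this
  have hmeasbad : MeasurableSet (⋂ i, X i ⁻¹' S) :=
    MeasurableSet.iInter fun i => (hmeas i) hSmeas
  have hprod : μ (⋂ i, X i ⁻¹' S) = ∏ i, μ (X i ⁻¹' S) :=
    hindep.meas_iInter fun i => ⟨S, hSmeas, rfl⟩
  have hbadle : μ {ω | F (z ω) < t} ≤ ENNReal.ofReal t ^ n := by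
    rw [hbad, hprod]
    have : ∏ i : Fin n, μ (X i ⁻¹' S) = ν S ^ n := by
      simp_rw [hXS]
      simp [Finset.prod_const]
    rw [this]
    exact pow_le_pow_left' hSle n
  have hgood : {ω | 1 - ε ≤ F (z ω)} = {ω | F (z ω) < t}ᶜ := by
    ext ω
    simp [ht, not_lt]
  have hcompl : μ {ω | 1 - ε ≤ F (z ω)} = 1 - μ {ω | F (z ω) < t} := by
    rw [hgood, measure_compl (hbad ▸ hmeasbad) (measure_ne_top μ _), measure_univ]
  have hbadReal : (μ {ω | F (z ω) < t}).toReal ≤ Real.exp (-2 * n * ε ^ 2) := by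
    have h1' : (μ {ω | F (z ω) < t}).toReal ≤ t ^ n := by
      have := ENNReal.toReal_mono (by
        exact ENNReal.pow_ne_top ENNReal.ofReal_ne_top) hbadle
      rwa [ENNReal.toReal_pow, ENNReal.toReal_ofReal (by linarith : (0:ℝ) ≤ t)] at this
    have h2' : t ^ n ≤ Real.exp (-2 * ε ^ 2) ^ n :=
      pow_le_pow_left₀ (by linarith) (one_sub_le_exp_neg_two_sq hε0.le h1.le) n
    have h3' : Real.exp (-2 * ε ^ 2) ^ n = Real.exp (-2 * n * ε ^ 2) := by
      rw [← Real.exp_nat_mul]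
      ring_nf
    linarith
  rw [hcompl, ENNReal.toReal_sub_of_le (by exact prob_le_one) ENNReal.one_ne_top,
    ENNReal.toReal_one]
  linarith
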